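/- In type Dₙ with n ≥ 6 even, a dominant coweight μ with ω₁^∨ ≤ μ satisfies μ ≱ ω₁^∨ + ω₂^∨ if and only if μ ≤ ω_{n-1}^∨ + ωₙ^∨. -/
import Mathlib


/-- The simple coroots of type `Dₙ` in `ℤⁿ`: `αᵢ^∨ = eᵢ - eᵢ₊₁` for `i ≤ n-1` and
`αₙ^∨ = e_{n-1} + eₙ` (indices `i : Fin n` are 0-based). -/
def Dcoroot (n : ℕ) (i : Fin n) : Fin n → ℤ :=
  fun j => if i.val = n - 1 then (if j.val = n - 2 ∨ j.val = n - 1 then 1 else 0)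
    else if j.val = i.val then 1 else if j.val = i.val + 1 then -1 else 0

/-- The fundamental coweight `ωₘ^∨ = e₁ + ⋯ + eₘ` of type `Dₙ` for `m ≤ n - 2`. -/
def Domega (n m : ℕ) : Fin n → ℤ := fun j => if j.val < m then 1 else 0

/-- Dominance order: `μ - λ` is a nonnegative integer combination of simple coroots. -/
def DdomLE (n : ℕ) (lam mu : Fin n → ℤ) : Prop :=
  ∃ c : Fin n → ℕ, mu - lam = ∑ i, (c i : ℤ) • Dcoroot n i

/-- Dominant coweights of type `Dₙ`: `μ₁ ≥ ⋯ ≥ μₙ` and `μ_{n-1} + μₙ ≥ 0`. -/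
def Ddominant (n : ℕ) (mu : Fin n → ℤ) : Prop :=
  Antitone mu ∧ ∀ i j : Fin n, i.val = n - 2 → j.val = n - 1 → 0 ≤ mu i + mu j


namespace Stmt8Aux

def Pa (n : ℕ) (f : Fin n → ℤ) (m : ℕ) : ℤ := ∑ j : Fin n, if (j : ℕ) < m then f j else 0

lemma Pa_zero (n : ℕ) (f : Fin n → ℤ) : Pa n f 0 = 0 := by simp [Pa]

lemma Pa_succ (n : ℕ) (f : Fin n → ℤ) (m : ℕ) (hm : m < n) :
    Pa n f (m + 1) = Pa n f m + f ⟨m, hm⟩ := by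
  unfold Pa
  have key : ∀ j : Fin n, (if (j:ℕ) < m + 1 then f j else 0)
      = (if (j:ℕ) < m then f j else 0) + (if j = ⟨m, hm⟩ then f j else 0) := by
    intro j
    rcases Nat.lt_trichotomy (j:ℕ) m with h | h | h
    · rw [if_pos (by omega : (j:ℕ) < m + 1), if_pos h,
        if_neg (show ¬ j = ⟨m, hm⟩ by simp [Fin.ext_iff]; omega)]; ring
    · rw [if_pos (by omega : (j:ℕ) < m + 1), if_neg (by omega),
        if_pos (show j = ⟨m, hm⟩ by simp [Fin.ext_iff, h])]; ring
    · rw [if_neg (by omega : ¬ (j:ℕ) < m + 1), if_neg (by omega),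
        if_neg (show ¬ j = ⟨m, hm⟩ by simp [Fin.ext_iff]; omega)]; ring
  rw [Finset.sum_congr rfl (fun j _ => key j), Finset.sum_add_distrib,
    Finset.sum_ite_eq' Finset.univ]
  simp

lemma Pa_sub (n : ℕ) (f g : Fin n → ℤ) (m : ℕ) :
    Pa n (f - g) m = Pa n f m - Pa n g m := by
  unfold Pa
  rw [← Finset.sum_sub_distrib]
  apply Finset.sum_congr rfl
  intro j _
  split_ifs <;> simp

lemma Pa_add (n : ℕ) (f g : Fin n → ℤ) (m : ℕ) :
    Pa n (f + g) m = Pa n f m + Pa n g m := by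
  unfold Pa
  rw [← Finset.sum_add_distrib]
  apply Finset.sum_congr rfl
  intro j _
  split_ifs <;> simp

lemma Pa_const (n : ℕ) (x : ℤ) (m : ℕ) (hm : m ≤ n) : Pa n (fun _ => x) m = m * x := by
  induction m with
  | zero => simp [Pa_zero]
  | succ k ih =>
      rw [Pa_succ n _ k (by omega), ih (by omega)]
      push_cast; ring

lemma Pa_omega (n m k : ℕ) (hk : k ≤ n) : Pa n (Domega n m) k = min m k := by
  have key : ∀ j : Fin n, (if (j:ℕ) < k then Domega n m j else 0)
      = (if (j:ℕ) < min m k then (1:ℤ) else 0) := by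
    intro j
    simp only [Domega]
    split_ifs <;> omega
  rw [Pa, Finset.sum_congr rfl (fun j _ => key j)]
  have := Pa_const n 1 (min m k) (by omega)
  rw [Pa] at this
  rw [this]
  simp

lemma Pa_seg_le (n : ℕ) (f g : Fin n → ℤ) (a b : ℕ) (hab : a ≤ b)
    (h : ∀ j : Fin n, a ≤ (j:ℕ) → (j:ℕ) < b → f j ≤ g j) :
    Pa n f b - Pa n f a ≤ Pa n g b - Pa n g a := by
  unfold Pa
  rw [← Finset.sum_sub_distrib, ← Finset.sum_sub_distrib]
  apply Finset.sum_le_sum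
  intro j _
  by_cases h1 : (j:ℕ) < a
  · simp [h1, (by omega : (j:ℕ) < b)]
  · by_cases h2 : (j:ℕ) < b
    · simp only [if_pos h2, if_neg h1]
      simpa using h j (by omega) h2
    · simp [h1, h2]


lemma eval_sum (n : ℕ) (hn : 6 ≤ n) (c : Fin n → ℤ) (j : Fin n) :
    (∑ i, c i • Dcoroot n i) j
    = (if (j:ℕ) = n-2 ∨ (j:ℕ) = n-1 then c ⟨n-1, by omega⟩ else 0)
      + (if (j:ℕ) ≠ n-1 then c j else 0)
      - (if 1 ≤ (j:ℕ) then c ⟨(j:ℕ)-1, by omega⟩ else 0) := by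
  have hjn := j.isLt
  rw [Finset.sum_apply]
  have key : ∀ i : Fin n, (c i • Dcoroot n i) j
      = (if i = (⟨n-1, by omega⟩ : Fin n) then (if (j:ℕ) = n-2 ∨ (j:ℕ) = n-1 then c i else 0) else 0)
        + (if i = j then (if (j:ℕ) ≠ n-1 then c i else 0) else 0)
        - (if i = (⟨(j:ℕ)-1, by omega⟩ : Fin n) then (if 1 ≤ (j:ℕ) then c i else 0) else 0) := by
    intro i
    have hin := i.isLt
    simp only [Pi.smul_apply, smul_eq_mul, Dcoroot, Fin.ext_iff, Fin.val_mk]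
    split_ifs <;> first | ring1 | omega
  rw [Finset.sum_congr rfl (fun i _ => key i)]
  rw [Finset.sum_sub_distrib, Finset.sum_add_distrib,
    Finset.sum_ite_eq' Finset.univ, Finset.sum_ite_eq' Finset.univ, Finset.sum_ite_eq' Finset.univ]
  simp

lemma nec0 (n : ℕ) (hn : 6 ≤ n) (c : Fin n → ℤ) :
    (∑ i, c i • Dcoroot n i) ⟨0, by omega⟩ = c ⟨0, by omega⟩ := by
  rw [eval_sum n hn c ⟨0, by omega⟩]
  rw [if_neg (by simp; omega), if_pos (by simp; omega), if_neg (by simp)]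
  ring

lemma rowsum (n : ℕ) (hn : 6 ≤ n) (i : Fin n) :
    ∑ j, Dcoroot n i j = if (i:ℕ) = n - 1 then 2 else 0 := by
  have hin := i.isLt
  by_cases h1 : (i:ℕ) = n - 1
  · rw [if_pos h1]
    have key : ∀ j : Fin n, Dcoroot n i j
        = (if j = (⟨n-2, by omega⟩ : Fin n) then (1:ℤ) else 0)
          + (if j = (⟨n-1, by omega⟩ : Fin n) then (1:ℤ) else 0) := by
      intro j
      have hjn := j.isLt
      simp only [Dcoroot, Fin.ext_iff, Fin.val_mk, if_pos h1]
      split_ifs <;> first | ring1 | omega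
    rw [Finset.sum_congr rfl (fun j _ => key j), Finset.sum_add_distrib,
      Finset.sum_ite_eq' Finset.univ, Finset.sum_ite_eq' Finset.univ]
    simp
  · rw [if_neg h1]
    have key : ∀ j : Fin n, Dcoroot n i j
        = (if j = i then (1:ℤ) else 0)
          - (if j = (⟨(i:ℕ)+1, by omega⟩ : Fin n) then (1:ℤ) else 0) := by
      intro j
      have hjn := j.isLt
      simp only [Dcoroot, Fin.ext_iff, Fin.val_mk, if_neg h1]
      split_ifs <;> first | ring1 | omega
    rw [Finset.sum_congr rfl (fun j _ => key j), Finset.sum_sub_distrib,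
      Finset.sum_ite_eq' Finset.univ, Finset.sum_ite_eq' Finset.univ]
    simp

lemma necTot (n : ℕ) (hn : 6 ≤ n) (c : Fin n → ℤ) :
    Pa n (∑ i, c i • Dcoroot n i) n = 2 * c ⟨n-1, by omega⟩ := by
  unfold Pa
  have step1 : ∀ j : Fin n, (if (j:ℕ) < n then (∑ i, c i • Dcoroot n i) j else 0)
      = ∑ i, c i * Dcoroot n i j := by
    intro j
    rw [if_pos j.isLt, Finset.sum_apply]
    exact Finset.sum_congr rfl (fun i _ => by simp)
  rw [Finset.sum_congr rfl (fun j _ => step1 j), Finset.sum_comm]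
  have step2 : ∀ i : Fin n, (∑ j, c i * Dcoroot n i j)
      = (if i = (⟨n-1, by omega⟩ : Fin n) then 2 * c i else 0) := by
    intro i
    rw [← Finset.mul_sum, rowsum n hn i]
    by_cases h : (i:ℕ) = n - 1
    · rw [if_pos h, if_pos (by simp [Fin.ext_iff, h])]; ring
    · rw [if_neg h, if_neg (by simp [Fin.ext_iff]; omega)]; ring
  rw [Finset.sum_congr rfl (fun i _ => step2 i), Finset.sum_ite_eq' Finset.univ]
  simp

lemma suff (n : ℕ) (hn : 6 ≤ n) (δ : Fin n → ℤ)
    (h1 : ∀ m : ℕ, 1 ≤ m → m ≤ n-2 → 0 ≤ Pa n δ m)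
    (h : ℤ) (h2 : Pa n δ n = h + h) (h2n : 0 ≤ h)
    (h3 : Pa n δ n ≤ 2 * Pa n δ (n-1)) :
    ∃ c : Fin n → ℕ, δ = ∑ i, (c i : ℤ) • Dcoroot n i := by
  set c' : Fin n → ℤ := fun i =>
    if (i:ℕ) + 1 ≤ n - 2 then Pa n δ ((i:ℕ)+1)
    else if (i:ℕ) = n - 2 then Pa n δ (n-1) - h else h with hc'
  have hc'nn : ∀ i : Fin n, 0 ≤ c' i := by
    intro i
    have hin := i.isLt
    simp only [hc']
    by_cases ha : (i:ℕ) + 1 ≤ n - 2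
    · rw [if_pos ha]; exact h1 _ (by omega) ha
    · rw [if_neg ha]
      by_cases hb : (i:ℕ) = n - 2
      · rw [if_pos hb]; omega
      · rw [if_neg hb]; exact h2n
  refine ⟨fun i => (c' i).toNat, ?_⟩
  have hcast : ∀ i : Fin n, (((c' i).toNat : ℤ)) = c' i := fun i => Int.toNat_of_nonneg (hc'nn i)
  funext j
  rw [eval_sum n hn _ j]
  rw [hcast, hcast, hcast]
  have hjn := j.isLt
  have hjeq : ∀ (m : ℕ) (hm : m < n), m = (j:ℕ) → δ ⟨m, hm⟩ = δ j := by
    intro m hm he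
    congr 1
    exact Fin.ext he
  have hL : c' ⟨n-1, by omega⟩ = h := by
    simp only [hc', Fin.val_mk]
    rw [if_neg (by omega), if_neg (by omega)]
  rcases Nat.lt_trichotomy ((j:ℕ)) (n-2) with hj | hj | hj
  · -- j.val < n - 2 : standard region
    have hstep : Pa n δ ((j:ℕ)+1) = Pa n δ (j:ℕ) + δ j := by
      rw [Pa_succ n δ (j:ℕ) (by omega), hjeq (j:ℕ) (by omega) rfl]
    rw [if_neg (by omega), if_pos (by omega)]
    by_cases h0 : 1 ≤ (j:ℕ)
    · rw [if_pos h0]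
      have hcj : c' j = Pa n δ ((j:ℕ)+1) := by
        simp only [hc']; rw [if_pos (by omega)]
      have hcp : c' ⟨(j:ℕ)-1, by omega⟩ = Pa n δ (j:ℕ) := by
        simp only [hc', Fin.val_mk]
        rw [if_pos (by omega)]
        congr 1
        omega
      rw [hcj, hcp, hstep]; ring
    · rw [if_neg h0]
      have hj0 : (j:ℕ) = 0 := by omega
      have hcj : c' j = Pa n δ ((j:ℕ)+1) := by
        simp only [hc']; rw [if_pos (by omega)]
      have h1' : Pa n δ ((j:ℕ)+1) = Pa n δ (j:ℕ) + δ j := by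
        rw [Pa_succ n δ (j:ℕ) (by omega), hjeq (j:ℕ) (by omega) rfl]
      have h0' : Pa n δ (j:ℕ) = 0 := by rw [hj0, Pa_zero]
      rw [hcj, h1', h0']; ring
  · -- j.val = n-2
    have hstep : Pa n δ (n-1) = Pa n δ (n-2) + δ j := by
      have h' := Pa_succ n δ (n-2) (by omega)
      rw [(by omega : n - 2 + 1 = n - 1)] at h'
      rw [h', hjeq (n-2) (by omega) (by omega)]
    rw [if_pos (by omega), if_pos (by omega), if_pos (by omega)]
    have hcj : c' j = Pa n δ (n-1) - h := by
      simp only [hc']; rw [if_neg (by omega), if_pos hj]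
    have hcp : c' ⟨(j:ℕ)-1, by omega⟩ = Pa n δ (n-2) := by
      simp only [hc', Fin.val_mk]
      rw [if_pos (by omega)]
      congr 1
      omega
    rw [hL, hcj, hcp, hstep]; ring
  · -- j.val = n-1
    have hjv : (j:ℕ) = n - 1 := by omega
    have hstep : Pa n δ n = Pa n δ (n-1) + δ j := by
      have h' := Pa_succ n δ (n-1) (by omega)
      rw [(by omega : n - 1 + 1 = n)] at h'
      rw [h', hjeq (n-1) (by omega) (by omega)]
    rw [if_pos (by omega), if_neg (by omega), if_pos (by omega)]
    have hcp : c' ⟨(j:ℕ)-1, by omega⟩ = Pa n δ (n-1) - h := by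
      simp only [hc', Fin.val_mk]
      rw [if_neg (by omega), if_pos (by omega)]
    rw [hL, hcp]
    have hd : δ j = Pa n δ n - Pa n δ (n-1) := by omega
    rw [hd, h2]; ring

lemma Pa_ge_const (n : ℕ) (f : Fin n → ℤ) (x : ℤ) (a b : ℕ) (hab : a ≤ b) (hb : b ≤ n)
    (hcomp : ∀ j : Fin n, a ≤ (j:ℕ) → (j:ℕ) < b → x ≤ f j) :
    (b:ℤ) * x - (a:ℤ) * x ≤ Pa n f b - Pa n f a := by
  have h := Pa_seg_le n (fun _ => x) f a b hab hcomp
  rwa [Pa_const n x b hb, Pa_const n x a (by omega)] at h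

lemma Pa_le_const (n : ℕ) (f : Fin n → ℤ) (x : ℤ) (a b : ℕ) (hab : a ≤ b) (hb : b ≤ n)
    (hcomp : ∀ j : Fin n, a ≤ (j:ℕ) → (j:ℕ) < b → f j ≤ x) :
    Pa n f b - Pa n f a ≤ (b:ℤ) * x - (a:ℤ) * x := by
  have h := Pa_seg_le n f (fun _ => x) a b hab hcomp
  rwa [Pa_const n x b hb, Pa_const n x a (by omega)] at h

end Stmt8Aux

open Stmt8Aux

/-- in type `Dₙ` with `n ≥ 6` even, a dominant coweight `μ` with
`μ - ω₁^∨` in the coroot lattice and `ω₁^∨ ≤ μ` satisfies `μ ≱ ω₁^∨ + ω₂^∨` iff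
`μ ≤ ω_{n-1}^∨ + ωₙ^∨ = e₁ + ⋯ + e_{n-1}`. -/
theorem stmt8 (n : ℕ) (hn : 6 ≤ n) (heven : Even n) (mu : Fin n → ℤ)
    (hdom : Ddominant n mu)
    (hlat : ∃ c : Fin n → ℤ, mu - Domega n 1 = ∑ i, c i • Dcoroot n i)
    (hge : DdomLE n (Domega n 1) mu) :
    (¬ DdomLE n (Domega n 1 + Domega n 2) mu) ↔ DdomLE n mu (Domega n (n - 1)) := by
  obtain ⟨hanti, hpair⟩ := hdom
  obtain ⟨p, hp⟩ := heven
  obtain ⟨c, hc⟩ := hge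
  have hn1 : n - 1 < n := by omega
  have hn2 : n - 2 < n := by omega
  have h0n : 0 < n := by omega
  have hmono : ∀ a b : Fin n, (a:ℕ) ≤ (b:ℕ) → mu b ≤ mu a := by
    intro a b hab
    exact hanti (by exact hab)
  have hpairKL : 0 ≤ mu ⟨n-2, hn2⟩ + mu ⟨n-1, hn1⟩ := hpair _ _ rfl rfl
  -- coordinate 0 of hge
  have h0 : mu ⟨0, h0n⟩ - 1 = (c ⟨0, h0n⟩ : ℤ) := by
    have h' := congrFun hc ⟨0, h0n⟩
    rw [nec0 n hn] at h'
    simp only [Pi.sub_apply, Domega, Fin.val_mk, if_pos (by omega : (0:ℕ) < 1)] at h'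
    exact h'
  -- total sum of hge
  have hodd : Pa n mu n = 2 * (c ⟨n-1, hn1⟩ : ℤ) + 1 := by
    have ht := necTot n hn (fun i => (c i : ℤ))
    rw [← hc, Pa_sub, Pa_omega n 1 n le_rfl] at ht
    have hm1 : min 1 n = 1 := by omega
    rw [hm1] at ht
    push_cast at ht ⊢
    omega
  -- step relations
  have hs2 : Pa n mu n = Pa n mu (n-1) + mu ⟨n-1, hn1⟩ := by
    have h' := Pa_succ n mu (n-1) hn1
    rw [(by omega : n - 1 + 1 = n)] at h'
    exact h'
  have hs1 : Pa n mu (n-1) = Pa n mu (n-2) + mu ⟨n-2, hn2⟩ := by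
    have h' := Pa_succ n mu (n-2) hn2
    rw [(by omega : n - 2 + 1 = n - 1)] at h'
    exact h'
  have hs0 : Pa n mu 1 = mu ⟨0, h0n⟩ := by
    have h' := Pa_succ n mu 0 h0n
    rw [Pa_zero] at h'
    rw [h']
    ring
  constructor
  · -- forward direction
    intro hnA
    by_cases hbig : 2 ≤ mu ⟨0, h0n⟩
    · exfalso
      apply hnA
      unfold DdomLE
      -- the key bound : 3 ≤ Pa n mu n
      have hSN3 : 3 ≤ Pa n mu n := by
        by_cases hLpos : 1 ≤ mu ⟨n-1, hn1⟩
        · have hseg := Pa_ge_const n mu 1 0 n (by omega) le_rfl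
            (fun j _ _ => le_trans hLpos (hmono j ⟨n-1, hn1⟩ (by simp; omega)))
          rw [Pa_zero] at hseg
          push_cast at hseg
          omega
        · push_neg at hLpos
          by_cases hLneg : mu ⟨n-1, hn1⟩ ≤ -1
          · have hKpos : 1 ≤ mu ⟨n-2, hn2⟩ := by omega
            have hseg := Pa_ge_const n mu 1 0 (n-2) (by omega) (by omega)
              (fun j _ hj => le_trans hKpos (hmono j ⟨n-2, hn2⟩ (by simp; omega)))
            rw [Pa_zero] at hseg
            push_cast at hseg
            omega
          · -- mu L = 0
            have hL0 : mu ⟨n-1, hn1⟩ = 0 := by omega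
            have hKpos : 0 ≤ mu ⟨n-2, hn2⟩ := by omega
            have hseg := Pa_ge_const n mu 0 1 (n-1) (by omega) (by omega)
              (fun j h1j h2j => le_trans hKpos (hmono j ⟨n-2, hn2⟩ (by simp; omega)))
            omega
      -- coefficient bound
      have hcL1 : 1 ≤ (c ⟨n-1, hn1⟩ : ℤ) := by omega
      have hPδ : ∀ m : ℕ, m ≤ n →
          Pa n (mu - (Domega n 1 + Domega n 2)) m
            = Pa n mu m - (min 1 m : ℕ) - (min 2 m : ℕ) := by
        intro m hm
        rw [Pa_sub, Pa_add, Pa_omega n 1 m hm, Pa_omega n 2 m hm]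
        ring
      refine suff n hn _ ?_ ((c ⟨n-1, hn1⟩ : ℤ) - 1) ?_ (by omega) ?_
      · intro m hm1 hm2
        rw [hPδ m (by omega)]
        rcases Nat.lt_or_ge m 2 with hm | hm
        · have hm1' : m = 1 := by omega
          subst hm1'
          simp only [(by omega : min 1 1 = 1), (by omega : min 2 1 = 1)]
          push_cast
          omega
        · have hmins : (min 1 m : ℕ) = 1 ∧ (min 2 m : ℕ) = 2 := by omega
          rw [hmins.1, hmins.2]
          have hmn : m < n := by omega
          by_cases hmu : 1 ≤ mu ⟨m, hmn⟩
          · have hseg := Pa_ge_const n mu 1 1 m (by omega) (by omega)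
              (fun j h1j h2j => le_trans hmu (hmono j ⟨m, hmn⟩ (by simp; omega)))
            push_cast at hseg
            omega
          · push_neg at hmu
            have hseg := Pa_le_const n mu 0 m n (by omega) le_rfl
              (fun j h1j h2j => le_trans (hmono ⟨m, hmn⟩ j (by simp; omega)) (by omega))
            push_cast at hseg
            omega
      · rw [hPδ n le_rfl]
        have : (min 1 n : ℕ) = 1 ∧ (min 2 n : ℕ) = 2 := by omega
        rw [this.1, this.2]
        push_cast
        omega
      · rw [hPδ n le_rfl, hPδ (n-1) (by omega)]
        have hm' : (min 1 n : ℕ) = 1 ∧ (min 2 n : ℕ) = 2 ∧ (min 1 (n-1) : ℕ) = 1 ∧ (min 2 (n-1) : ℕ) = 2 := by omega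
        rw [hm'.1, hm'.2.1, hm'.2.2.1, hm'.2.2.2]
        by_cases hLp : 1 ≤ mu ⟨n-1, hn1⟩
        · have hseg := Pa_ge_const n mu (mu ⟨n-1, hn1⟩) 0 (n-1) (by omega) (by omega)
            (fun j _ _ => hmono j ⟨n-1, hn1⟩ (by simp; omega))
          rw [Pa_zero] at hseg
          have hc5 : (5:ℤ) ≤ ((n-1 : ℕ) : ℤ) := by
            have : (5:ℕ) ≤ n - 1 := by omega
            exact_mod_cast this
          have hkey : 0 ≤ (((n-1:ℕ):ℤ) - 5) * mu ⟨n-1, hn1⟩ :=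
            mul_nonneg (by linarith) (by linarith)
          push_cast at *
          nlinarith [hseg, hkey, hLp]
        · push_neg at hLp
          push_cast
          omega
    · -- mu 0 ≤ 1 : prove the RHS
      push_neg at hbig
      have hub : ∀ j : Fin n, mu j ≤ 1 := fun j =>
        le_trans (hmono ⟨0, h0n⟩ j (by simp)) (by omega)
      have hL0 : 0 ≤ mu ⟨n-1, hn1⟩ := by
        by_contra h'
        push_neg at h'
        have hKpos : 1 ≤ mu ⟨n-2, hn2⟩ := by omega
        have hseg1 := Pa_ge_const n mu 1 0 (n-1) (by omega) (by omega)
          (fun j _ hj => le_trans hKpos (hmono j ⟨n-2, hn2⟩ (by simp; omega)))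
        have hseg2 := Pa_le_const n mu 1 0 (n-1) (by omega) (by omega)
          (fun j _ _ => hub j)
        rw [Pa_zero] at hseg1 hseg2
        have hKub := hub ⟨n-2, hn2⟩
        omega
      have hPδ : ∀ m : ℕ, m ≤ n →
          Pa n (Domega n (n-1) - mu) m = ((min (n-1) m : ℕ) : ℤ) - Pa n mu m := by
        intro m hm
        rw [Pa_sub, Pa_omega n (n-1) m hm]
      have hSn_le : Pa n mu n ≤ (n:ℤ) := by
        have hseg := Pa_le_const n mu 1 0 n (by omega) le_rfl (fun j _ _ => hub j)
        rw [Pa_zero] at hseg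
        omega
      have hSn1_le : Pa n mu (n-1) ≤ ((n-1:ℕ):ℤ) := by
        have hseg := Pa_le_const n mu 1 0 (n-1) (by omega) (by omega) (fun j _ _ => hub j)
        rw [Pa_zero] at hseg
        omega
      unfold DdomLE
      refine suff n hn _ ?_ ((p:ℤ) - 1 - (c ⟨n-1, hn1⟩ : ℤ)) ?_ ?_ ?_
      · intro m hm1 hm2
        rw [hPδ m (by omega), (by omega : min (n-1) m = m)]
        have hseg := Pa_le_const n mu 1 0 m (by omega) (by omega) (fun j _ _ => hub j)
        rw [Pa_zero] at hseg
        omega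
      · rw [hPδ n le_rfl, (by omega : min (n-1) n = n-1)]
        omega
      · omega
      · rw [hPδ n le_rfl, hPδ (n-1) (by omega), (by omega : min (n-1) n = n-1),
          (by omega : min (n-1) (n-1) = n-1)]
        omega
  · -- backward direction
    intro hB hA
    obtain ⟨d, hd⟩ := hA
    obtain ⟨e, he⟩ := hB
    have hd0 : mu ⟨0, h0n⟩ - 2 = (d ⟨0, h0n⟩ : ℤ) := by
      have h' := congrFun hd ⟨0, h0n⟩
      rw [nec0 n hn] at h'
      simp only [Pi.sub_apply, Pi.add_apply, Domega, Fin.val_mk,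
        if_pos (by omega : (0:ℕ) < 1), if_pos (by omega : (0:ℕ) < 2)] at h'
      omega
    have he0 : 1 - mu ⟨0, h0n⟩ = (e ⟨0, h0n⟩ : ℤ) := by
      have h' := congrFun he ⟨0, h0n⟩
      rw [nec0 n hn] at h'
      simp only [Pi.sub_apply, Domega, Fin.val_mk,
        if_pos (by omega : (0:ℕ) < n - 1)] at h'
      omega
    omega
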